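/- For every 1 ≤ i ≤ 2^ν, the element Ψ_{w_i} has order 2m = 2(6s₂ + 5·2^ν) in G(Σ, e), and the element Ψ_{t_i} has order 3m = 3(6s₂ + 5·2^ν) in G(Σ, e). -/

import Mathlib

/-- The subgroup of relations: `e s • ψ s - e t • ψ t` for all `s t`, together with
`∑ s, ψ s`. -/
noncomputable def relSub {S : Type*} [Fintype S] (e : S → ℤ) : AddSubgroup (S →₀ ℤ) :=
  AddSubgroup.closure
    ({x | ∃ s t : S, x = Finsupp.single s (e s) - Finsupp.single t (e t)} ∪
      {∑ s : S, Finsupp.single s 1})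

/-- `G(Σ, e)`: the quotient of the free abelian group on `Σ` by the relations. -/
abbrev CompGrp {S : Type*} [Fintype S] (e : S → ℤ) : Type _ :=
  (S →₀ ℤ) ⧸ relSub e

/-- `Ψ s`: the image of the basis element `ψ s` in `G(Σ, e)`. -/
noncomputable def Psi {S : Type*} [Fintype S] (e : S → ℤ) (s : S) : CompGrp e :=
  QuotientAddGroup.mk (Finsupp.single s 1)

/-- `Σ = Σ₂ ⊔ Σ₄ ⊔ Σ₆` with `#Σ₂ = s₂` and `#Σ₄ = #Σ₆ = 2^ν`. -/
abbrev Sig4 (s₂ ν : ℕ) : Type := Fin s₂ ⊕ (Fin (2 ^ ν) ⊕ Fin (2 ^ ν))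

/-- `e ≡ 1` on `Σ₂`, `e ≡ 2` on `Σ₄` and `e ≡ 3` on `Σ₆`. -/
def e4 (s₂ ν : ℕ) : Sig4 s₂ ν → ℤ :=
  Sum.elim (fun _ => 1) (Sum.elim (fun _ => 2) (fun _ => 3))

/-- `w i` (`1`-based): the `i`-th point of `Σ₄ = {w_1, …, w_{2^ν}}`. -/
def wPt4 (s₂ ν : ℕ) (i : ℕ) : Sig4 s₂ ν :=
  Sum.inr (Sum.inl ⟨(i - 1) % 2 ^ ν, Nat.mod_lt _ (Nat.pow_pos (by norm_num))⟩)

/-- `t i` (`1`-based): the `i`-th point of `Σ₆ = {t_1, …, t_{2^ν}}`. -/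
def tPt4 (s₂ ν : ℕ) (i : ℕ) : Sig4 s₂ ν :=
  Sum.inr (Sum.inr ⟨(i - 1) % 2 ^ ν, Nat.mod_lt _ (Nat.pow_pos (by norm_num))⟩)

/-- The generators `u_j` (`1`-based, `u_0 := Ψ w` with `w = w_{2^ν - 1}`):
for `1 ≤ k ≤ 2^{ν-1} - 2`, `u_{2k-1} = Ψ w_{2k-1} - Ψ w` and
`u_{2k} = Ψ w_{2k-1} + Ψ w_{2k} - Ψ w - Ψ w'` (with `w' = w_{2^ν}`); and
`u_{2^ν-3} = Ψ w_{2^ν-3} - Ψ w` (the odd-index formula again),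
`u_{2^ν-2} = Ψ w_{2^ν-3} - Ψ w_{2^ν-2}`. -/
noncomputable def uGen4 (s₂ ν : ℕ) : ℕ → CompGrp (e4 s₂ ν) := fun j =>
  if j = 0 then Psi (e4 s₂ ν) (wPt4 s₂ ν (2 ^ ν - 1))
  else if j = 2 ^ ν - 2 then
    Psi (e4 s₂ ν) (wPt4 s₂ ν (2 ^ ν - 3)) - Psi (e4 s₂ ν) (wPt4 s₂ ν (2 ^ ν - 2))
  else if j % 2 = 1 then
    Psi (e4 s₂ ν) (wPt4 s₂ ν j) - Psi (e4 s₂ ν) (wPt4 s₂ ν (2 ^ ν - 1))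
  else
    Psi (e4 s₂ ν) (wPt4 s₂ ν (j - 1)) + Psi (e4 s₂ ν) (wPt4 s₂ ν j)
      - Psi (e4 s₂ ν) (wPt4 s₂ ν (2 ^ ν - 1)) - Psi (e4 s₂ ν) (wPt4 s₂ ν (2 ^ ν))

/-- The generators `v_j` (`1`-based): `v_{2k-1} = Ψ t_{2k-1} - Ψ t_{2k}` for
`1 ≤ k ≤ 2^{ν-1}` and `v_{2k} = Ψ t_{2k-1} + Ψ t_{2k} - Ψ t - Ψ t'` for
`1 ≤ k ≤ 2^{ν-1} - 1` (with `t = t_{2^ν - 1}`, `t' = t_{2^ν}`). -/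
noncomputable def vGen4 (s₂ ν : ℕ) : ℕ → CompGrp (e4 s₂ ν) := fun j =>
  if j % 2 = 1 then
    Psi (e4 s₂ ν) (tPt4 s₂ ν j) - Psi (e4 s₂ ν) (tPt4 s₂ ν (j + 1))
  else
    Psi (e4 s₂ ν) (tPt4 s₂ ν (j - 1)) + Psi (e4 s₂ ν) (tPt4 s₂ ν j)
      - Psi (e4 s₂ ν) (tPt4 s₂ ν (2 ^ ν - 1)) - Psi (e4 s₂ ν) (tPt4 s₂ ν (2 ^ ν))


section Aux

variable {S : Type*} [Fintype S]

/-- Membership of `(∑ c) * e s • ψ_s` in the relation subgroup, when `c t * e t = 6`. -/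
lemma aux_mem_relSub (e : S → ℤ) (c : S → ℤ)
    (hc : ∀ t, c t * e t = 6) (s : S) :
    ((∑ t : S, c t) * e s) • Finsupp.single s (1:ℤ) ∈ relSub e := by
  have hgen : ∀ a b : S,
      Finsupp.single a (e a) - Finsupp.single b (e b) ∈ relSub e :=
    fun a b => AddSubgroup.subset_closure (Or.inl ⟨a, b, rfl⟩)
  have hsum : (∑ t : S, Finsupp.single t (1:ℤ)) ∈ relSub e :=
    AddSubgroup.subset_closure (Or.inr rfl)
  have h1 : ∀ t : S, c t • Finsupp.single t (e t) = (6:ℤ) • Finsupp.single t (1:ℤ) := by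
    intro t
    rw [Finsupp.smul_single, Finsupp.smul_single, smul_eq_mul, smul_eq_mul, hc, mul_one]
  have h2 : (∑ t : S, c t • (Finsupp.single s (e s) - Finsupp.single t (e t)))
      = (∑ t : S, c t) • Finsupp.single s (e s)
        - (6:ℤ) • ∑ t : S, Finsupp.single t (1:ℤ) := by
    calc ∑ t : S, c t • (Finsupp.single s (e s) - Finsupp.single t (e t))
        = ∑ t : S, (c t • Finsupp.single s (e s) - (6:ℤ) • Finsupp.single t (1:ℤ)) := by
          refine Finset.sum_congr rfl fun t _ => ?_
          rw [smul_sub, h1]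
      _ = (∑ t : S, c t • Finsupp.single s (e s))
            - ∑ t : S, (6:ℤ) • Finsupp.single t (1:ℤ) := Finset.sum_sub_distrib _ _
      _ = (∑ t : S, c t) • Finsupp.single s (e s)
            - (6:ℤ) • ∑ t : S, Finsupp.single t (1:ℤ) := by
          rw [← Finset.sum_smul, Finset.smul_sum]
  have key : ((∑ t : S, c t) * e s) • Finsupp.single s (1:ℤ) =
      (∑ t : S, c t • (Finsupp.single s (e s) - Finsupp.single t (e t)))
        + (6:ℤ) • ∑ t : S, Finsupp.single t (1:ℤ) := by
    rw [h2]
    rw [show ((∑ t : S, c t) * e s) • Finsupp.single s (1:ℤ)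
        = (∑ t : S, c t) • Finsupp.single s (e s) by
      rw [Finsupp.smul_single, Finsupp.smul_single, smul_eq_mul, smul_eq_mul, mul_one]]
    abel
  rw [key]
  exact AddSubgroup.add_mem _
    (AddSubgroup.sum_mem _ fun t _ => AddSubgroup.zsmul_mem _ (hgen s t) _)
    (AddSubgroup.zsmul_mem _ hsum 6)

lemma aux_nsmul_psi_eq_zero (e : S → ℤ) (c : S → ℤ)
    (hc : ∀ t, c t * e t = 6) (s : S) (k : ℕ)
    (hk : (k : ℤ) = (∑ t : S, c t) * e s) :
    k • Psi e s = 0 := by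
  have hmem : (k • Finsupp.single s (1:ℤ) : S →₀ ℤ) ∈ relSub e := by
    have := aux_mem_relSub e c hc s
    rwa [← hk, natCast_zsmul] at this
  have : k • Psi e s = QuotientAddGroup.mk (k • Finsupp.single s (1:ℤ)) := by
    show k • QuotientAddGroup.mk' (relSub e) (Finsupp.single s (1:ℤ)) = _
    rw [← map_nsmul]
    rfl
  rw [this, QuotientAddGroup.eq_zero_iff]
  exact hmem

end Aux

/-- auxiliary coefficient function: `c t = 6 / e t`. -/
def c4 (s₂ ν : ℕ) : Sig4 s₂ ν → ℤ :=
  Sum.elim (fun _ => 6) (Sum.elim (fun _ => 3) (fun _ => 2))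

lemma c4_mul (s₂ ν : ℕ) (s : Sig4 s₂ ν) : c4 s₂ ν s * e4 s₂ ν s = 6 := by
  rcases s with a | b | c <;> rfl

lemma c4_sum (s₂ ν : ℕ) : ∑ t : Sig4 s₂ ν, c4 s₂ ν t = ((6 * s₂ + 5 * 2 ^ ν : ℕ) : ℤ) := by
  simp only [c4, Fintype.sum_sum_type, Sum.elim_inl, Sum.elim_inr, Finset.sum_const,
    Finset.card_univ, Fintype.card_fin, nsmul_eq_mul]
  push_cast
  ring

/-- The test homomorphism values in `ZMod (6m)`. -/
noncomputable def g4 (s₂ ν : ℕ) (j0 : Fin (2 ^ ν)) :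
    Sig4 s₂ ν → ZMod (6 * (6 * s₂ + 5 * 2 ^ ν)) :=
  Sum.elim (fun _ => 6)
    (Sum.elim
      (fun j => 3 + if j = j0 then ((3 * (6 * s₂ + 5 * 2 ^ ν) : ℕ) :
        ZMod (6 * (6 * s₂ + 5 * 2 ^ ν))) else 0)
      (fun j => 2 + if j = j0 then ((2 * (6 * s₂ + 5 * 2 ^ ν) : ℕ) :
        ZMod (6 * (6 * s₂ + 5 * 2 ^ ν))) else 0))

lemma mcast_zero (s₂ ν : ℕ) :
    6 * (6 * (s₂ : ZMod (6 * (6 * s₂ + 5 * 2 ^ ν)))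
      + 5 * (2 : ZMod (6 * (6 * s₂ + 5 * 2 ^ ν))) ^ ν) = 0 := by
  have h := ZMod.natCast_self (6 * (6 * s₂ + 5 * 2 ^ ν))
  push_cast at h
  linear_combination h

lemma g4_rel (s₂ ν : ℕ) (j0 : Fin (2 ^ ν)) (s : Sig4 s₂ ν) :
    e4 s₂ ν s • g4 s₂ ν j0 s = 6 := by
  have h0 := mcast_zero s₂ ν
  rcases s with a | j | j
  · show (1:ℤ) • (6 : ZMod (6 * (6 * s₂ + 5 * 2 ^ ν))) = 6
    rw [one_smul]
  · show (2:ℤ) • (3 + if j = j0 then _ else 0) = (6 : ZMod (6 * (6 * s₂ + 5 * 2 ^ ν)))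
    rw [zsmul_eq_mul]
    split_ifs
    · push_cast
      linear_combination h0
    · push_cast
      ring
  · show (3:ℤ) • (2 + if j = j0 then _ else 0) = (6 : ZMod (6 * (6 * s₂ + 5 * 2 ^ ν)))
    rw [zsmul_eq_mul]
    split_ifs
    · push_cast
      linear_combination h0
    · push_cast
      ring

lemma g4_sum (s₂ ν : ℕ) (j0 : Fin (2 ^ ν)) :
    ∑ s : Sig4 s₂ ν, g4 s₂ ν j0 s = 0 := by
  have h0 := mcast_zero s₂ ν
  simp only [g4, Fintype.sum_sum_type, Sum.elim_inl, Sum.elim_inr, Finset.sum_add_distrib,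
    Finset.sum_ite_eq', Finset.mem_univ, if_true, Finset.sum_const, Finset.card_univ,
    Fintype.card_fin, nsmul_eq_mul]
  push_cast
  linear_combination h0

lemma relSub_le_ker (s₂ ν : ℕ) (j0 : Fin (2 ^ ν)) :
    relSub (e4 s₂ ν) ≤
      (Finsupp.linearCombination ℤ (g4 s₂ ν j0)).toAddMonoidHom.ker := by
  rw [relSub, AddSubgroup.closure_le]
  rintro x (⟨a, b, rfl⟩ | rfl)
  · rw [SetLike.mem_coe, AddMonoidHom.mem_ker]
    show Finsupp.linearCombination ℤ (g4 s₂ ν j0) _ = 0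
    rw [map_sub, Finsupp.linearCombination_single, Finsupp.linearCombination_single,
      g4_rel, g4_rel, sub_self]
  · rw [SetLike.mem_coe, AddMonoidHom.mem_ker]
    show Finsupp.linearCombination ℤ (g4 s₂ ν j0) _ = 0
    rw [map_sum]
    have : ∀ t : Sig4 s₂ ν, Finsupp.linearCombination ℤ (g4 s₂ ν j0)
        (Finsupp.single t (1:ℤ)) = g4 s₂ ν j0 t := by
      intro t
      rw [Finsupp.linearCombination_single, one_smul]
    rw [Finset.sum_congr rfl fun t _ => this t]
    exact g4_sum s₂ ν j0

/-- The induced homomorphism on the quotient. -/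
noncomputable def Fbar4 (s₂ ν : ℕ) (j0 : Fin (2 ^ ν)) :
    CompGrp (e4 s₂ ν) →+ ZMod (6 * (6 * s₂ + 5 * 2 ^ ν)) :=
  QuotientAddGroup.lift (relSub (e4 s₂ ν))
    (Finsupp.linearCombination ℤ (g4 s₂ ν j0)).toAddMonoidHom (relSub_le_ker s₂ ν j0)

lemma Fbar4_psi (s₂ ν : ℕ) (j0 : Fin (2 ^ ν)) (s : Sig4 s₂ ν) :
    Fbar4 s₂ ν j0 (Psi (e4 s₂ ν) s) = g4 s₂ ν j0 s := by
  show Fbar4 s₂ ν j0 (QuotientAddGroup.mk (Finsupp.single s (1:ℤ))) = _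
  rw [Fbar4, QuotientAddGroup.lift_mk]
  show Finsupp.linearCombination ℤ (g4 s₂ ν j0) (Finsupp.single s (1:ℤ)) = _
  rw [Finsupp.linearCombination_single, one_smul]

/-- each `Ψ w_i` (`1 ≤ i ≤ 2^ν`) has order `2m = 2(6s₂ + 5·2^ν)` and
each `Ψ t_i` has order `3m = 3(6s₂ + 5·2^ν)` in `G(Σ, e)`. -/
theorem stmt14 (s₂ ν : ℕ) (hν : 1 ≤ ν) :
    ∀ i : ℕ, 1 ≤ i → i ≤ 2 ^ ν →
      addOrderOf (Psi (e4 s₂ ν) (wPt4 s₂ ν i)) = 2 * (6 * s₂ + 5 * 2 ^ ν) ∧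
      addOrderOf (Psi (e4 s₂ ν) (tPt4 s₂ ν i)) = 3 * (6 * s₂ + 5 * 2 ^ ν) := by
  intro i hi1 hi2
  have h2n : 2 ≤ 2 ^ ν := by
    calc 2 = 2 ^ 1 := rfl
    _ ≤ 2 ^ ν := Nat.pow_le_pow_right (by norm_num) hν
  have hilt : i - 1 < 2 ^ ν := by omega
  have hN0 : 6 * (6 * s₂ + 5 * 2 ^ ν) ≠ 0 := by positivity
  -- the distinguished indices
  set i0 : Fin (2 ^ ν) := ⟨i - 1, hilt⟩ with hi0
  set j0 : Fin (2 ^ ν) := ⟨if i - 1 = 0 then 1 else 0, by split <;> omega⟩ with hj0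
  have hne : i0 ≠ j0 := by
    intro heq
    have hv : i - 1 = (if i - 1 = 0 then 1 else 0) := congrArg Fin.val heq
    split at hv <;> omega
  have hwPt : wPt4 s₂ ν i = Sum.inr (Sum.inl i0) := by
    unfold wPt4
    congr 1
    congr 1
    exact Fin.ext (Nat.mod_eq_of_lt hilt)
  have htPt : tPt4 s₂ ν i = Sum.inr (Sum.inr i0) := by
    unfold tPt4
    congr 1
    congr 1
    exact Fin.ext (Nat.mod_eq_of_lt hilt)
  -- upper bounds
  have hwz : (2 * (6 * s₂ + 5 * 2 ^ ν)) • Psi (e4 s₂ ν) (wPt4 s₂ ν i) = 0 := by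
    apply aux_nsmul_psi_eq_zero (e4 s₂ ν) (c4 s₂ ν) (c4_mul s₂ ν)
    rw [c4_sum, hwPt]
    show ((2 * (6 * s₂ + 5 * 2 ^ ν) : ℕ) : ℤ) = _ * 2
    push_cast
    ring
  have htz : (3 * (6 * s₂ + 5 * 2 ^ ν)) • Psi (e4 s₂ ν) (tPt4 s₂ ν i) = 0 := by
    apply aux_nsmul_psi_eq_zero (e4 s₂ ν) (c4 s₂ ν) (c4_mul s₂ ν)
    rw [c4_sum, htPt]
    show ((3 * (6 * s₂ + 5 * 2 ^ ν) : ℕ) : ℤ) = _ * 3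
    push_cast
    ring
  -- images under F
  have hFw : Fbar4 s₂ ν j0 (Psi (e4 s₂ ν) (wPt4 s₂ ν i)) = ((3 : ℕ) :
      ZMod (6 * (6 * s₂ + 5 * 2 ^ ν))) := by
    rw [hwPt, Fbar4_psi]
    show (3 : ZMod (6 * (6 * s₂ + 5 * 2 ^ ν))) + (if i0 = j0 then _ else 0) = _
    rw [if_neg hne, add_zero]
    norm_cast
  have hFt : Fbar4 s₂ ν j0 (Psi (e4 s₂ ν) (tPt4 s₂ ν i)) = ((2 : ℕ) :
      ZMod (6 * (6 * s₂ + 5 * 2 ^ ν))) := by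
    rw [htPt, Fbar4_psi]
    show (2 : ZMod (6 * (6 * s₂ + 5 * 2 ^ ν))) + (if i0 = j0 then _ else 0) = _
    rw [if_neg hne, add_zero]
    norm_cast
  -- orders of the images
  have hord3 : addOrderOf ((3 : ℕ) : ZMod (6 * (6 * s₂ + 5 * 2 ^ ν)))
      = 2 * (6 * s₂ + 5 * 2 ^ ν) := by
    rw [ZMod.addOrderOf_coe _ hN0,
      Nat.gcd_eq_right ⟨2 * (6 * s₂ + 5 * 2 ^ ν), by ring⟩,
      show 6 * (6 * s₂ + 5 * 2 ^ ν) = 3 * (2 * (6 * s₂ + 5 * 2 ^ ν)) by ring,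
      Nat.mul_div_cancel_left _ (by norm_num)]
  have hord2 : addOrderOf ((2 : ℕ) : ZMod (6 * (6 * s₂ + 5 * 2 ^ ν)))
      = 3 * (6 * s₂ + 5 * 2 ^ ν) := by
    rw [ZMod.addOrderOf_coe _ hN0,
      Nat.gcd_eq_right ⟨3 * (6 * s₂ + 5 * 2 ^ ν), by ring⟩,
      show 6 * (6 * s₂ + 5 * 2 ^ ν) = 2 * (3 * (6 * s₂ + 5 * 2 ^ ν)) by ring,
      Nat.mul_div_cancel_left _ (by norm_num)]
  constructor
  · refine Nat.dvd_antisymm (addOrderOf_dvd_of_nsmul_eq_zero hwz) ?_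
    rw [← hord3, ← hFw]
    exact addOrderOf_map_dvd _ _
  · refine Nat.dvd_antisymm (addOrderOf_dvd_of_nsmul_eq_zero htz) ?_
    rw [← hord2, ← hFt]
    exact addOrderOf_map_dvd _ _
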